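/- For a combinatory pre-model A, the following are equivalent: (1) A is strongly reflexive; (2) A[X] is strongly reflexive; (3) A[X] is reflexive; (4) A[X] is a combinatory model (satisfies the Meyer–Scott axiom). -/

import Mathlib

/-- A combinatory pre-model: an applicative structure with constants
`k`, `s`, `i`, `e` satisfying the usual equations. -/
structure CPM : Type 1 where
  carrier : Type
  app : carrier → carrier → carrier
  k : carrier
  s : carrier
  i : carrier
  e : carrier
  k_ax : ∀ a b, app (app k a) b = a
  s_ax : ∀ a b c, app (app (app s a) b) c = app (app a c) (app b c)
  i_ax : ∀ a, app i a = a
  e_ax : ∀ a b, app (app e a) b = app a b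

/-- Homomorphisms of combinatory pre-models. -/
structure CPMHom (A B : CPM) where
  toFun : A.carrier → B.carrier
  map_app : ∀ a b, toFun (A.app a b) = B.app (toFun a) (toFun b)
  map_k : toFun A.k = B.k
  map_s : toFun A.s = B.s
  map_i : toFun A.i = B.i
  map_e : toFun A.e = B.e

/-- Terms: the free applicative structure over a set `S`. -/
inductive Tm (S : Type) : Type
  | of : S → Tm S
  | app : Tm S → Tm S → Tm S

/-- The congruence generated by the combinator equations and the embedding
relation, defining the polynomial algebra over `A` in indeterminates `V`. -/
inductive PolyEq (A : CPM) (V : Type) : Tm (V ⊕ A.carrier) → Tm (V ⊕ A.carrier) → Prop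
  | kEq (t u) : PolyEq A V (.app (.app (.of (.inr A.k)) t) u) t
  | sEq (t u v) : PolyEq A V (.app (.app (.app (.of (.inr A.s)) t) u) v)
      (.app (.app t v) (.app u v))
  | iEq (t) : PolyEq A V (.app (.of (.inr A.i)) t) t
  | eEq (t u) : PolyEq A V (.app (.app (.of (.inr A.e)) t) u) (.app t u)
  | inj (a b : A.carrier) :
      PolyEq A V (.app (.of (.inr a)) (.of (.inr b))) (.of (.inr (A.app a b)))
  | refl (t) : PolyEq A V t t
  | symm {t u} : PolyEq A V t u → PolyEq A V u t
  | trans {t u v} : PolyEq A V t u → PolyEq A V u v → PolyEq A V t v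
  | congr {t t' u u'} : PolyEq A V t t' → PolyEq A V u u' →
      PolyEq A V (.app t u) (.app t' u')

/-- Application on the quotient. -/
def polyApp (A : CPM) (V : Type) :
    Quot (PolyEq A V) → Quot (PolyEq A V) → Quot (PolyEq A V) :=
  Quot.lift
    (fun t => Quot.lift (fun u => Quot.mk _ (Tm.app t u))
      (fun _ _ h => Quot.sound (PolyEq.congr (PolyEq.refl t) h)))
    (fun t t' h => by
      funext q
      induction q using Quot.ind with
      | _ u => exact Quot.sound (PolyEq.congr h (PolyEq.refl u)))

/-- The polynomial algebra `A[V]`. -/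
def polyAlg (A : CPM) (V : Type) : CPM where
  carrier := Quot (PolyEq A V)
  app := polyApp A V
  k := Quot.mk _ (.of (.inr A.k))
  s := Quot.mk _ (.of (.inr A.s))
  i := Quot.mk _ (.of (.inr A.i))
  e := Quot.mk _ (.of (.inr A.e))
  k_ax := by
    intro a b
    induction a using Quot.ind with | _ t =>
    induction b using Quot.ind with | _ u =>
    exact Quot.sound (PolyEq.kEq t u)
  s_ax := by
    intro a b c
    induction a using Quot.ind with | _ t =>
    induction b using Quot.ind with | _ u =>
    induction c using Quot.ind with | _ v =>
    exact Quot.sound (PolyEq.sEq t u v)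
  i_ax := by
    intro a
    induction a using Quot.ind with | _ t =>
    exact Quot.sound (PolyEq.iEq t)
  e_ax := by
    intro a b
    induction a using Quot.ind with | _ t =>
    induction b using Quot.ind with | _ u =>
    exact Quot.sound (PolyEq.eEq t u)

/-- The canonical embedding `η : A → A[V]`. -/
def eta (A : CPM) (V : Type) : CPMHom A (polyAlg A V) where
  toFun a := Quot.mk _ (.of (.inr a))
  map_app a b := (Quot.sound (PolyEq.inj a b)).symm
  map_k := rfl
  map_s := rfl
  map_i := rfl
  map_e := rfl

/-- The indeterminate `v` as an element of `A[V]`. -/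
def xvar (A : CPM) (V : Type) (v : V) : (polyAlg A V).carrier :=
  Quot.mk _ (.of (.inl v))

/-- Reflexivity stated via the polynomial algebra: `a·x = b·x` in `A[x]`
implies `e a = e b`. -/
def ReflexiveP (A : CPM) : Prop :=
  ∀ a b : A.carrier,
    Quot.mk (PolyEq A Unit) (.app (.of (.inr a)) (.of (.inl ()))) =
      Quot.mk (PolyEq A Unit) (.app (.of (.inr b)) (.of (.inl ()))) →
    A.app A.e a = A.app A.e b

/-- The Meyer–Scott axiom. -/
def MeyerScott (A : CPM) : Prop :=
  ∀ a b, (∀ c, A.app a c = A.app b c) → A.app A.e a = A.app A.e b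

/-- Strong reflexivity: the polynomial algebra `A[x]` is reflexive. -/
def StronglyReflexive (A : CPM) : Prop := ReflexiveP (polyAlg A Unit)

section Aux

/-- Interpret a term in a CPM `B`, given values for the atoms. -/
def interp (B : CPM) {S : Type} (φ : S → B.carrier) : Tm S → B.carrier
  | .of s => φ s
  | .app t u => B.app (interp B φ t) (interp B φ u)

/-- Composition of CPM homomorphisms. -/
def CPMHom.comp {A B C : CPM} (g : CPMHom B C) (h : CPMHom A B) : CPMHom A C where
  toFun a := g.toFun (h.toFun a)
  map_app a b := by show g.toFun (h.toFun (A.app a b)) = _; rw [h.map_app, g.map_app]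
  map_k := by show g.toFun (h.toFun A.k) = _; rw [h.map_k, g.map_k]
  map_s := by show g.toFun (h.toFun A.s) = _; rw [h.map_s, g.map_s]
  map_i := by show g.toFun (h.toFun A.i) = _; rw [h.map_i, g.map_i]
  map_e := by show g.toFun (h.toFun A.e) = _; rw [h.map_e, g.map_e]

theorem interp_eq {A B : CPM} {V : Type} (h : CPMHom A B) (val : V → B.carrier)
    {t u : Tm (V ⊕ A.carrier)} (pe : PolyEq A V t u) :
    interp B (Sum.elim val h.toFun) t = interp B (Sum.elim val h.toFun) u := by
  induction pe with
  | kEq t u => simp only [interp, Sum.elim_inr, h.map_k]; exact B.k_ax _ _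
  | sEq t u v => simp only [interp, Sum.elim_inr, h.map_s]; exact B.s_ax _ _ _
  | iEq t => simp only [interp, Sum.elim_inr, h.map_i]; exact B.i_ax _
  | eEq t u => simp only [interp, Sum.elim_inr, h.map_e]; exact B.e_ax _ _
  | inj a b => simp only [interp, Sum.elim_inr]; exact (h.map_app a b).symm
  | refl t => rfl
  | symm _ ih => exact ih.symm
  | trans _ _ ih1 ih2 => exact ih1.trans ih2
  | congr _ _ ih1 ih2 => simp only [interp, ih1, ih2]

/-- The universal property of the polynomial algebra: extend a hom `A → B`
by an assignment of values to the indeterminates. -/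
def extend {A B : CPM} {V : Type} (h : CPMHom A B) (val : V → B.carrier) :
    CPMHom (polyAlg A V) B where
  toFun := Quot.lift (interp B (Sum.elim val h.toFun)) (fun _ _ pe => interp_eq h val pe)
  map_app a b := by
    induction a using Quot.ind
    induction b using Quot.ind
    rfl
  map_k := h.map_k
  map_s := h.map_s
  map_i := h.map_i
  map_e := h.map_e

theorem ext_inl {A B : CPM} {V : Type} (h : CPMHom A B) (val : V → B.carrier) (v : V) :
    (extend h val).toFun (Quot.mk (PolyEq A V) (.of (.inl v))) = val v := rfl

theorem ext_inr {A B : CPM} {V : Type} (h : CPMHom A B) (val : V → B.carrier) (a : A.carrier) :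
    (extend h val).toFun (Quot.mk (PolyEq A V) (.of (.inr a))) = h.toFun a := rfl

theorem ext_app {A B : CPM} {V : Type} (h : CPMHom A B) (val : V → B.carrier)
    (t u : Tm (V ⊕ A.carrier)) :
    (extend h val).toFun (Quot.mk (PolyEq A V) (.app t u)) =
      B.app ((extend h val).toFun (Quot.mk (PolyEq A V) t))
        ((extend h val).toFun (Quot.mk (PolyEq A V) u)) := rfl

theorem eta_tf (A : CPM) (V : Type) (a : A.carrier) :
    (eta A V).toFun a = Quot.mk (PolyEq A V) (.of (.inr a)) := rfl

theorem xvar_mk (A : CPM) (V : Type) (v : V) :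
    xvar A V v = Quot.mk (PolyEq A V) (.of (.inl v)) := rfl

theorem palg_app (A : CPM) (V : Type) (t u : Tm (V ⊕ A.carrier)) :
    (polyAlg A V).app (Quot.mk (PolyEq A V) t) (Quot.mk (PolyEq A V) u) =
      Quot.mk (PolyEq A V) (.app t u) := rfl

/-- The induced hom `B[x] → C[x]` of a hom `B → C`. -/
def liftHom {B C : CPM} (h : CPMHom B C) : CPMHom (polyAlg B Unit) (polyAlg C Unit) :=
  extend (CPMHom.comp (eta C Unit) h) (fun _ => xvar C Unit ())

theorem lift_inl {B C : CPM} (h : CPMHom B C) (u : Unit) :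
    (liftHom h).toFun (Quot.mk (PolyEq B Unit) (.of (.inl u))) = xvar C Unit () :=
  ext_inl _ _ _

theorem lift_inr {B C : CPM} (h : CPMHom B C) (a : B.carrier) :
    (liftHom h).toFun (Quot.mk (PolyEq B Unit) (.of (.inr a))) =
      (eta C Unit).toFun (h.toFun a) :=
  ext_inr _ _ _

theorem lift_app {B C : CPM} (h : CPMHom B C) (t u : Tm (Unit ⊕ B.carrier)) :
    (liftHom h).toFun (Quot.mk (PolyEq B Unit) (.app t u)) =
      (polyAlg C Unit).app ((liftHom h).toFun (Quot.mk (PolyEq B Unit) t))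
        ((liftHom h).toFun (Quot.mk (PolyEq B Unit) u)) :=
  ext_app _ _ _ _

theorem liftHom_var {B C : CPM} (h : CPMHom B C) (a : B.carrier) :
    (liftHom h).toFun (Quot.mk (PolyEq B Unit) (.app (.of (.inr a)) (.of (.inl ())))) =
      Quot.mk (PolyEq C Unit) (.app (.of (.inr (h.toFun a))) (.of (.inl ()))) := by
  rw [lift_app, lift_inr, lift_inl, eta_tf, xvar_mk, palg_app]

/-- Transfer of reflexivity along a split injection of CPMs. -/
theorem transfer {B C : CPM} (h : CPMHom B C) (g : CPMHom C B)
    (gh : ∀ x, g.toFun (h.toFun x) = x) :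
    ReflexiveP C → ReflexiveP B := by
  intro rc a b hyp
  have h1 := congrArg (liftHom h).toFun hyp
  rw [liftHom_var, liftHom_var] at h1
  have h3 := congrArg g.toFun (rc _ _ h1)
  rwa [g.map_app, g.map_app, g.map_e, gh, gh] at h3

/-- Single-variable bracket abstraction on terms. -/
def abs1 (A : CPM) (m : ℕ) : Tm (ℕ ⊕ A.carrier) → Tm (ℕ ⊕ A.carrier)
  | .of (.inl j) => if j = m then .of (.inr A.i) else .app (.of (.inr A.k)) (.of (.inl j))
  | .of (.inr c) => .app (.of (.inr A.k)) (.of (.inr c))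
  | .app t u => .app (.app (.of (.inr A.s)) (abs1 A m t)) (abs1 A m u)

/-- Substitution of a term for a single variable. -/
def sub1 (A : CPM) (m : ℕ) (r : Tm (ℕ ⊕ A.carrier)) : Tm (ℕ ⊕ A.carrier) → Tm (ℕ ⊕ A.carrier)
  | .of (.inl j) => if j = m then r else .of (.inl j)
  | .of (.inr c) => .of (.inr c)
  | .app t u => .app (sub1 A m r t) (sub1 A m r u)

theorem abs1_beta (A : CPM) (m : ℕ) (r : Tm (ℕ ⊕ A.carrier)) :
    ∀ t, PolyEq A ℕ (.app (abs1 A m t) r) (sub1 A m r t) := by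
  intro t
  induction t with
  | of s =>
    cases s with
    | inl j =>
      by_cases hj : j = m
      · simp only [abs1, sub1, if_pos hj]
        exact .iEq r
      · simp only [abs1, sub1, if_neg hj]
        exact .kEq _ _
    | inr c =>
      simp only [abs1, sub1]
      exact .kEq _ _
  | app t u iht ihu => exact .trans (.sEq _ _ _) (.congr iht ihu)

theorem sub1_self (A : CPM) (m : ℕ) : ∀ t, sub1 A m (.of (.inl m)) t = t := by
  intro t
  induction t with
  | of s =>
    cases s with
    | inl j => by_cases hj : j = m <;> simp [sub1, hj]
    | inr c => rfl
  | app t u iht ihu => simp only [sub1, iht, ihu]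

/-- Abstract away variables `0, …, m-1` (innermost first). -/
def absDown (A : CPM) : ℕ → Tm (ℕ ⊕ A.carrier) → Tm (ℕ ⊕ A.carrier)
  | 0, t => t
  | m+1, t => absDown A m (abs1 A m t)

/-- Apply a head term to the spine of variables `x₀ ⋯ x_{m-1}`. -/
def spineTm (A : CPM) : ℕ → Tm (ℕ ⊕ A.carrier) → Tm (ℕ ⊕ A.carrier)
  | 0, h => h
  | m+1, h => .app (spineTm A m h) (.of (.inl m))

theorem sub1_spineTm (A : CPM) (n : ℕ) (r : Tm (ℕ ⊕ A.carrier)) :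
    ∀ m, m ≤ n → sub1 A n r (spineTm A m (.of (.inl n))) = spineTm A m r := by
  intro m
  induction m with
  | zero => intro _; simp [spineTm, sub1]
  | succ m ih =>
    intro hmn
    simp only [spineTm, sub1]
    rw [ih (by omega), if_neg (by omega : ¬ m = n)]

theorem spine_absDown (A : CPM) :
    ∀ (m : ℕ) (t : Tm (ℕ ⊕ A.carrier)), PolyEq A ℕ (spineTm A m (absDown A m t)) t := by
  intro m
  induction m with
  | zero => intro t; exact .refl t
  | succ m ih =>
    intro t
    have h1 : PolyEq A ℕ (spineTm A (m+1) (absDown A (m+1) t))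
        (.app (abs1 A m t) (.of (.inl m))) := by
      simp only [absDown, spineTm]
      exact .congr (ih (abs1 A m t)) (.refl _)
    have h2 := abs1_beta A m (.of (.inl m)) t
    rw [sub1_self] at h2
    exact h1.trans h2

/-- The `i`-th selector, a closed term. -/
def selTm (A : CPM) (n i : ℕ) : Tm (ℕ ⊕ A.carrier) := absDown A n (.of (.inl i))

/-- The tuple `⟨x₀, …, x_{n-1}⟩`, with variables below `n`. -/
def tupTm (A : CPM) (n : ℕ) : Tm (ℕ ⊕ A.carrier) :=
  abs1 A n (spineTm A n (.of (.inl n)))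

theorem tup_sel (A : CPM) (n i : ℕ) :
    PolyEq A ℕ (.app (tupTm A n) (selTm A n i)) (.of (.inl i)) := by
  have h1 := abs1_beta A n (selTm A n i) (spineTm A n (.of (.inl n)))
  rw [sub1_spineTm A n _ n le_rfl] at h1
  exact h1.trans (spine_absDown A n (.of (.inl i)))

/-- All variables of a term are below `n`. -/
def VarsLt (A : CPM) (n : ℕ) : Tm (ℕ ⊕ A.carrier) → Prop
  | .of (.inl j) => j < n
  | .of (.inr _) => True
  | .app t u => VarsLt A n t ∧ VarsLt A n u

theorem varsLt_mono (A : CPM) {m m' : ℕ} (h : m ≤ m') :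
    ∀ t, VarsLt A m t → VarsLt A m' t := by
  intro t
  induction t with
  | of s => cases s with
    | inl j => intro hj; exact lt_of_lt_of_le hj h
    | inr c => intro _; trivial
  | app t u iht ihu => intro ht; exact ⟨iht ht.1, ihu ht.2⟩

def bnd (A : CPM) : Tm (ℕ ⊕ A.carrier) → ℕ
  | .of (.inl j) => j + 1
  | .of (.inr _) => 0
  | .app t u => max (bnd A t) (bnd A u)

theorem varsLt_bnd (A : CPM) : ∀ t, VarsLt A (bnd A t) t := by
  intro t
  induction t with
  | of s => cases s with
    | inl j => exact Nat.lt_succ_self j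
    | inr c => trivial
  | app t u iht ihu =>
    exact ⟨varsLt_mono A (le_max_left _ _) t iht, varsLt_mono A (le_max_right _ _) u ihu⟩

theorem varsLt_abs1 (A : CPM) (m : ℕ) :
    ∀ t, VarsLt A (m+1) t → VarsLt A m (abs1 A m t) := by
  intro t
  induction t with
  | of s => cases s with
    | inl j =>
      intro hj
      have hj' : j < m + 1 := hj
      by_cases h : j = m
      · simp only [abs1, if_pos h]; trivial
      · simp only [abs1, if_neg h]
        exact ⟨trivial, show j < m by omega⟩
    | inr c => intro _; exact ⟨trivial, trivial⟩
  | app t u iht ihu => intro ht; exact ⟨⟨trivial, iht ht.1⟩, ihu ht.2⟩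

theorem varsLt0_absDown (A : CPM) :
    ∀ m t, VarsLt A m t → VarsLt A 0 (absDown A m t) := by
  intro m
  induction m with
  | zero => intro t ht; exact ht
  | succ m ih => intro t ht; exact ih (abs1 A m t) (varsLt_abs1 A m t ht)

/-- A closed term's class is in the image of `η`. -/
theorem closed_class (A : CPM) :
    ∀ t, VarsLt A 0 t →
      Quot.mk (PolyEq A ℕ) t = (eta A ℕ).toFun (interp A (Sum.elim (fun _ => A.i) id) t) := by
  intro t
  induction t with
  | of s => cases s with
    | inl j =>
      intro hj
      have hj' : j < 0 := hj
      exact absurd hj' (Nat.not_lt_zero j)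
    | inr c => intro _; rfl
  | app t u iht ihu =>
    intro ht
    rw [← palg_app, iht ht.1, ihu ht.2, ← (eta A ℕ).map_app]
    rfl

def selA (A : CPM) (n i : ℕ) : A.carrier :=
  interp A (Sum.elim (fun _ => A.i) id) (selTm A n i)

theorem eta_selA (A : CPM) (n i : ℕ) (h : i < n) :
    (eta A ℕ).toFun (selA A n i) = Quot.mk (PolyEq A ℕ) (selTm A n i) :=
  (closed_class A (selTm A n i) (varsLt0_absDown A n (.of (.inl i)) h)).symm

/-- Substitution `xᵢ ↦ x ⬝ selᵢ`. -/
def sigHom (A : CPM) (n : ℕ) : CPMHom (polyAlg A ℕ) (polyAlg A Unit) :=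
  extend (eta A Unit)
    (fun i => (polyAlg A Unit).app (xvar A Unit ()) ((eta A Unit).toFun (selA A n i)))

theorem sig_inl (A : CPM) (n i : ℕ) :
    (sigHom A n).toFun (Quot.mk (PolyEq A ℕ) (.of (.inl i))) =
      (polyAlg A Unit).app (xvar A Unit ()) ((eta A Unit).toFun (selA A n i)) :=
  ext_inl _ _ _

theorem sig_inr (A : CPM) (n : ℕ) (c : A.carrier) :
    (sigHom A n).toFun (Quot.mk (PolyEq A ℕ) (.of (.inr c))) = (eta A Unit).toFun c :=
  ext_inr _ _ _

theorem sig_app (A : CPM) (n : ℕ) (t u : Tm (ℕ ⊕ A.carrier)) :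
    (sigHom A n).toFun (Quot.mk (PolyEq A ℕ) (.app t u)) =
      (polyAlg A Unit).app ((sigHom A n).toFun (Quot.mk (PolyEq A ℕ) t))
        ((sigHom A n).toFun (Quot.mk (PolyEq A ℕ) u)) :=
  ext_app _ _ _ _

/-- Substitution `x ↦ ⟨x₀, …, x_{n-1}⟩`. -/
def tauHom (A : CPM) (n : ℕ) : CPMHom (polyAlg A Unit) (polyAlg A ℕ) :=
  extend (eta A ℕ) (fun _ => Quot.mk (PolyEq A ℕ) (tupTm A n))

theorem tau_inl (A : CPM) (n : ℕ) (u : Unit) :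
    (tauHom A n).toFun (Quot.mk (PolyEq A Unit) (.of (.inl u))) =
      Quot.mk (PolyEq A ℕ) (tupTm A n) :=
  ext_inl _ _ _

theorem tau_inr (A : CPM) (n : ℕ) (c : A.carrier) :
    (tauHom A n).toFun (Quot.mk (PolyEq A Unit) (.of (.inr c))) = (eta A ℕ).toFun c :=
  ext_inr _ _ _

theorem tau_sig (A : CPM) (n : ℕ) :
    ∀ t, VarsLt A n t →
      (tauHom A n).toFun ((sigHom A n).toFun (Quot.mk (PolyEq A ℕ) t)) =
        Quot.mk (PolyEq A ℕ) t := by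
  intro t
  induction t with
  | of s => cases s with
    | inl i =>
      intro hi
      have hi' : i < n := hi
      rw [sig_inl, (tauHom A n).map_app, xvar_mk, tau_inl, eta_tf A Unit (selA A n i),
        tau_inr, eta_selA A n i hi', palg_app]
      exact Quot.sound (tup_sel A n i)
    | inr c =>
      intro _
      rw [sig_inr, eta_tf A Unit c, tau_inr, eta_tf A ℕ c]
  | app t u iht ihu =>
    intro ht
    erw [← palg_app, (sigHom A n).map_app, (tauHom A n).map_app, iht ht.1, ihu ht.2]

theorem one_to_many (A : CPM) :
    ReflexiveP (polyAlg A Unit) → ReflexiveP (polyAlg A ℕ) := by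
  intro r1 a b hyp
  obtain ⟨ta, rfl⟩ := Quot.exists_rep a
  obtain ⟨tb, rfl⟩ := Quot.exists_rep b
  set n := max (bnd A ta) (bnd A tb) with hn
  have hta : VarsLt A n ta := varsLt_mono A (le_max_left _ _) ta (varsLt_bnd A ta)
  have htb : VarsLt A n tb := varsLt_mono A (le_max_right _ _) tb (varsLt_bnd A tb)
  have h1 := congrArg (liftHom (sigHom A n)).toFun hyp
  erw [liftHom_var, liftHom_var] at h1
  have h3 := congrArg (tauHom A n).toFun (r1 _ _ h1)
  rw [(tauHom A n).map_app, (tauHom A n).map_app, (tauHom A n).map_e,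
    tau_sig A n ta hta, tau_sig A n tb htb] at h3
  exact h3

def upHom (A : CPM) : CPMHom (polyAlg A Unit) (polyAlg A ℕ) :=
  extend (eta A ℕ) (fun _ => xvar A ℕ 0)

def downHom (A : CPM) : CPMHom (polyAlg A ℕ) (polyAlg A Unit) :=
  extend (eta A Unit) (fun _ => xvar A Unit ())

theorem up_inl (A : CPM) (u : Unit) :
    (upHom A).toFun (Quot.mk (PolyEq A Unit) (.of (.inl u))) = xvar A ℕ 0 := ext_inl _ _ _

theorem up_inr (A : CPM) (c : A.carrier) :
    (upHom A).toFun (Quot.mk (PolyEq A Unit) (.of (.inr c))) = (eta A ℕ).toFun c :=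
  ext_inr _ _ _

theorem down_inl (A : CPM) (m : ℕ) :
    (downHom A).toFun (Quot.mk (PolyEq A ℕ) (.of (.inl m))) = xvar A Unit () := ext_inl _ _ _

theorem down_inr (A : CPM) (c : A.carrier) :
    (downHom A).toFun (Quot.mk (PolyEq A ℕ) (.of (.inr c))) = (eta A Unit).toFun c :=
  ext_inr _ _ _

theorem down_up (A : CPM) : ∀ x, (downHom A).toFun ((upHom A).toFun x) = x := by
  intro x
  induction x using Quot.ind with
  | _ t =>
    induction t with
    | of s => cases s with
      | inl u =>
        cases u
        rw [up_inl, xvar_mk, down_inl, xvar_mk]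
      | inr c => rw [up_inr, eta_tf A ℕ c, down_inr, eta_tf A Unit c]
    | app t u iht ihu =>
      erw [← palg_app, (upHom A).map_app, (downHom A).map_app, iht, ihu]

theorem many_to_one (A : CPM) :
    ReflexiveP (polyAlg A ℕ) → ReflexiveP (polyAlg A Unit) :=
  transfer (upHom A) (downHom A) (down_up A)

/-- Doubling hom `A[ℕ] → A[ℕ]`, `xᵢ ↦ x_{2i}`. -/
def dblHom (A : CPM) : CPMHom (polyAlg A ℕ) (polyAlg A ℕ) :=
  extend (eta A ℕ) (fun i => xvar A ℕ (2*i))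

def phiHom (A : CPM) : CPMHom (polyAlg (polyAlg A ℕ) ℕ) (polyAlg A ℕ) :=
  extend (dblHom A) (fun j => xvar A ℕ (2*j+1))

def psiHom (A : CPM) : CPMHom (polyAlg A ℕ) (polyAlg (polyAlg A ℕ) ℕ) :=
  extend (CPMHom.comp (eta (polyAlg A ℕ) ℕ) (eta A ℕ))
    (fun m => if m % 2 = 0 then (eta (polyAlg A ℕ) ℕ).toFun (xvar A ℕ (m/2))
      else xvar (polyAlg A ℕ) ℕ (m/2))

theorem dbl_inl (A : CPM) (i : ℕ) :
    (dblHom A).toFun (Quot.mk (PolyEq A ℕ) (.of (.inl i))) = xvar A ℕ (2*i) := ext_inl _ _ _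

theorem dbl_inr (A : CPM) (c : A.carrier) :
    (dblHom A).toFun (Quot.mk (PolyEq A ℕ) (.of (.inr c))) = (eta A ℕ).toFun c :=
  ext_inr _ _ _

theorem phi_inl (A : CPM) (j : ℕ) :
    (phiHom A).toFun (Quot.mk (PolyEq (polyAlg A ℕ) ℕ) (.of (.inl j))) = xvar A ℕ (2*j+1) :=
  ext_inl _ _ _

theorem phi_inr (A : CPM) (q : (polyAlg A ℕ).carrier) :
    (phiHom A).toFun (Quot.mk (PolyEq (polyAlg A ℕ) ℕ) (.of (.inr q))) = (dblHom A).toFun q :=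
  ext_inr _ _ _

theorem psi_inl (A : CPM) (m : ℕ) :
    (psiHom A).toFun (Quot.mk (PolyEq A ℕ) (.of (.inl m))) =
      if m % 2 = 0 then (eta (polyAlg A ℕ) ℕ).toFun (xvar A ℕ (m/2))
        else xvar (polyAlg A ℕ) ℕ (m/2) :=
  ext_inl _ _ _

theorem psi_inr (A : CPM) (c : A.carrier) :
    (psiHom A).toFun (Quot.mk (PolyEq A ℕ) (.of (.inr c))) =
      (eta (polyAlg A ℕ) ℕ).toFun ((eta A ℕ).toFun c) :=
  ext_inr _ _ _

theorem psi_app (A : CPM) (t u : Tm (ℕ ⊕ A.carrier)) :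
    (psiHom A).toFun (Quot.mk (PolyEq A ℕ) (.app t u)) =
      (polyAlg (polyAlg A ℕ) ℕ).app ((psiHom A).toFun (Quot.mk (PolyEq A ℕ) t))
        ((psiHom A).toFun (Quot.mk (PolyEq A ℕ) u)) :=
  ext_app _ _ _ _

theorem psi_dbl (A : CPM) :
    ∀ q, (psiHom A).toFun ((dblHom A).toFun q) = (eta (polyAlg A ℕ) ℕ).toFun q := by
  intro q
  induction q using Quot.ind with
  | _ t =>
    induction t with
    | of s => cases s with
      | inl i =>
        rw [dbl_inl, xvar_mk, psi_inl, if_pos (by omega : 2*i % 2 = 0),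
          (by omega : 2*i/2 = i), ← xvar_mk]
      | inr c =>
        rw [dbl_inr, eta_tf A ℕ c, psi_inr, eta_tf A ℕ c]
    | app t u iht ihu =>
      erw [← palg_app, (dblHom A).map_app, (psiHom A).map_app, iht, ihu,
        (eta (polyAlg A ℕ) ℕ).map_app]

theorem psi_phi (A : CPM) : ∀ x, (psiHom A).toFun ((phiHom A).toFun x) = x := by
  intro x
  induction x using Quot.ind with
  | _ t =>
    induction t with
    | of s => cases s with
      | inl j =>
        rw [phi_inl, xvar_mk, psi_inl, if_neg (by omega : ¬ (2*j+1) % 2 = 0),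
          (by omega : (2*j+1)/2 = j), xvar_mk]
      | inr q =>
        rw [phi_inr, psi_dbl A q, eta_tf]
    | app t u iht ihu =>
      erw [← palg_app, (phiHom A).map_app, (psiHom A).map_app, iht, ihu]

theorem phi_psi (A : CPM) : ∀ x, (phiHom A).toFun ((psiHom A).toFun x) = x := by
  intro x
  induction x using Quot.ind with
  | _ t =>
    induction t with
    | of s => cases s with
      | inl m =>
        rw [psi_inl]
        by_cases hm : m % 2 = 0
        · rw [if_pos hm, eta_tf (polyAlg A ℕ) ℕ (xvar A ℕ (m/2)), phi_inr,
            xvar_mk A ℕ (m/2), dbl_inl, (by omega : 2*(m/2) = m), xvar_mk]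
        · rw [if_neg hm, xvar_mk (polyAlg A ℕ) ℕ (m/2), phi_inl,
            (by omega : 2*(m/2)+1 = m), xvar_mk]
      | inr c =>
        rw [psi_inr, eta_tf (polyAlg A ℕ) ℕ ((eta A ℕ).toFun c), phi_inr,
          eta_tf A ℕ c, dbl_inr, eta_tf A ℕ c]
    | app t u iht ihu =>
      erw [← palg_app, (psiHom A).map_app, (phiHom A).map_app, iht, ihu]

theorem two_iff_three (A : CPM) :
    StronglyReflexive (polyAlg A ℕ) ↔ ReflexiveP (polyAlg A ℕ) := by
  constructor
  · intro h
    exact transfer (psiHom A) (phiHom A) (phi_psi A) (one_to_many (polyAlg A ℕ) h)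
  · intro h
    exact many_to_one (polyAlg A ℕ) (transfer (phiHom A) (psiHom A) (psi_phi A) h)

def idHom (A : CPM) : CPMHom A A := ⟨id, fun _ _ => rfl, rfl, rfl, rfl, rfl⟩

theorem idHom_tf (A : CPM) (a : A.carrier) : (idHom A).toFun a = a := rfl

theorem evalHom_var (B : CPM) (c a : B.carrier) :
    (extend (idHom B) (fun _ : Unit => c)).toFun
        (Quot.mk (PolyEq B Unit) (.app (.of (.inr a)) (.of (.inl ())))) = B.app a c := by
  rw [ext_app, ext_inr, ext_inl, idHom_tf]

theorem ms_to_r (A : CPM) : MeyerScott (polyAlg A ℕ) → ReflexiveP (polyAlg A ℕ) := by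
  intro ms a b hyp
  apply ms
  intro c
  have h1 := congrArg (extend (idHom (polyAlg A ℕ)) (fun _ : Unit => c)).toFun hyp
  rwa [evalHom_var, evalHom_var] at h1

/-- Substitution `x_n ↦ x`, `x_m ↦ x_m` (m ≠ n), into `A[ℕ][x]`. -/
def rhoHom (A : CPM) (n : ℕ) : CPMHom (polyAlg A ℕ) (polyAlg (polyAlg A ℕ) Unit) :=
  extend (CPMHom.comp (eta (polyAlg A ℕ) Unit) (eta A ℕ))
    (fun m => if m = n then xvar (polyAlg A ℕ) Unit ()
      else (eta (polyAlg A ℕ) Unit).toFun (xvar A ℕ m))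

theorem rho_inl (A : CPM) (n m : ℕ) :
    (rhoHom A n).toFun (Quot.mk (PolyEq A ℕ) (.of (.inl m))) =
      if m = n then xvar (polyAlg A ℕ) Unit ()
        else (eta (polyAlg A ℕ) Unit).toFun (xvar A ℕ m) :=
  ext_inl _ _ _

theorem rho_inr (A : CPM) (n : ℕ) (c : A.carrier) :
    (rhoHom A n).toFun (Quot.mk (PolyEq A ℕ) (.of (.inr c))) =
      (eta (polyAlg A ℕ) Unit).toFun ((eta A ℕ).toFun c) :=
  ext_inr _ _ _

theorem rho_app (A : CPM) (n : ℕ) (t u : Tm (ℕ ⊕ A.carrier)) :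
    (rhoHom A n).toFun (Quot.mk (PolyEq A ℕ) (.app t u)) =
      (polyAlg (polyAlg A ℕ) Unit).app ((rhoHom A n).toFun (Quot.mk (PolyEq A ℕ) t))
        ((rhoHom A n).toFun (Quot.mk (PolyEq A ℕ) u)) :=
  ext_app _ _ _ _

theorem r_to_ms (A : CPM) : ReflexiveP (polyAlg A ℕ) → MeyerScott (polyAlg A ℕ) := by
  intro r a b hyp
  obtain ⟨ta, rfl⟩ := Quot.exists_rep a
  obtain ⟨tb, rfl⟩ := Quot.exists_rep b
  set n := max (bnd A ta) (bnd A tb) with hn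
  have hta : VarsLt A n ta := varsLt_mono A (le_max_left _ _) ta (varsLt_bnd A ta)
  have htb : VarsLt A n tb := varsLt_mono A (le_max_right _ _) tb (varsLt_bnd A tb)
  have key : ∀ t, VarsLt A n t →
      (rhoHom A n).toFun (Quot.mk (PolyEq A ℕ) t) =
        (eta (polyAlg A ℕ) Unit).toFun (Quot.mk (PolyEq A ℕ) t) := by
    intro t
    induction t with
    | of s => cases s with
      | inl m =>
        intro hm
        have hm' : m < n := hm
        rw [rho_inl, if_neg (by omega : ¬ m = n), xvar_mk]
      | inr c =>
        intro _
        rw [rho_inr, eta_tf A ℕ c]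
    | app t u iht ihu =>
      intro ht
      erw [← palg_app, (rhoHom A n).map_app, (eta (polyAlg A ℕ) Unit).map_app,
        iht ht.1, ihu ht.2]
  have en : (rhoHom A n).toFun (Quot.mk (PolyEq A ℕ) (.of (.inl n))) =
      xvar (polyAlg A ℕ) Unit () := by
    rw [rho_inl, if_pos rfl]
  have h0 := hyp (xvar A ℕ n)
  rw [xvar_mk, palg_app, palg_app] at h0
  have h1 := congrArg (rhoHom A n).toFun h0
  rw [rho_app, rho_app, key ta hta, key tb htb, en,
    eta_tf (polyAlg A ℕ) Unit (Quot.mk (PolyEq A ℕ) ta),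
    eta_tf (polyAlg A ℕ) Unit (Quot.mk (PolyEq A ℕ) tb),
    xvar_mk, palg_app, palg_app] at h1
  exact r _ _ h1

end Aux
/-- equivalent characterisations of strong reflexivity via
`A[X]`. -/
theorem stronglyReflexive_tfae (A : CPM) :
    (StronglyReflexive A ↔ StronglyReflexive (polyAlg A ℕ)) ∧
    (StronglyReflexive A ↔ ReflexiveP (polyAlg A ℕ)) ∧
    (StronglyReflexive A ↔ MeyerScott (polyAlg A ℕ)) := by
  refine ⟨?_, ⟨one_to_many A, many_to_one A⟩, ?_⟩
  · exact Iff.trans ⟨one_to_many A, many_to_one A⟩ (two_iff_three A).symm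
  · exact Iff.trans ⟨one_to_many A, many_to_one A⟩ ⟨r_to_ms A, ms_to_r A⟩
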